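/- Let $G$ be a topological group and let $A, B \subseteq G$ be compact subsets with $aA \cup bB \subseteq A \cup B$ and $aA \cap bB \subseteq c(A \cap B)$ for some $a, b, c \in G$. If the subgroup generated by $\{a, b, c\}$ is discrete, then $aA \cup bB = A \cup B$ and $aA \cap bB = c(A \cap B)$. -/

import Mathlib

open Pointwise

/-- If `C` is compact and `H` is a discrete subgroup, then the intersection of `C`
with any left coset `H * x` is finite. -/
lemma key_fin {G : Type*} [Group G] [TopologicalSpace G] [IsTopologicalGroup G]
    (H : Subgroup G) [DiscreteTopology H] {C : Set G} (hC : IsCompact C) (x : G) :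
    (C ∩ {g : G | g * x⁻¹ ∈ H}).Finite := by
  by_contra hinf
  set S := C ∩ {g : G | g * x⁻¹ ∈ H} with hS
  have hinf : S.Infinite := hinf
  -- discreteness gives an open set isolating 1 in H
  obtain ⟨U, hUopen, hUpre⟩ : ∃ U : Set G, IsOpen U ∧ Subtype.val ⁻¹' U = ({1} : Set H) := by
    have h : IsOpen ({1} : Set H) := isOpen_discrete _
    rwa [isOpen_induced_iff] at h
  have h1U : (1 : G) ∈ U := by
    have : (⟨1, H.one_mem⟩ : H) ∈ Subtype.val ⁻¹' U := by rw [hUpre]; rfl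
    exact this
  have hmem : ∀ h : G, h ∈ H → h ∈ U → h = 1 := by
    intro h hh hU
    have : (⟨h, hh⟩ : H) ∈ Subtype.val ⁻¹' U := hU
    rw [hUpre] at this
    exact congrArg Subtype.val this
  -- a small symmetric neighborhood
  obtain ⟨V, hV1, hV⟩ := exists_nhds_split_inv (hUopen.mem_nhds h1U)
  -- cluster point
  have hne : (Filter.cofinite ⊓ Filter.principal S).NeBot := by
    rw [Filter.inf_principal_neBot_iff]
    intro W hW
    have : (S \ Wᶜ).Infinite := hinf.diff hW
    obtain ⟨g, hg⟩ := this.nonempty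
    exact ⟨g, not_not.mp hg.2, hg.1⟩
  have hle : Filter.cofinite ⊓ Filter.principal S ≤ Filter.principal C :=
    le_trans inf_le_right (Filter.principal_mono.2 Set.inter_subset_left)
  obtain ⟨p, hpC, hp⟩ := hC hle
  -- W := translate of V to p
  have hWnhds : (fun u : G => u * p⁻¹) ⁻¹' V ∈ nhds p := by
    have hcont : ContinuousAt (fun u : G => u * p⁻¹) p :=
      (continuous_id.mul continuous_const).continuousAt
    exact hcont.preimage_mem_nhds (by simp only [mul_inv_cancel]; exact hV1)
  set W := (fun u : G => u * p⁻¹) ⁻¹' V with hWdef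
  have hF : (nhds p ⊓ (Filter.cofinite ⊓ Filter.principal S)).NeBot := hp
  -- find u in W ∩ S
  have hWS : W ∩ S ∈ nhds p ⊓ (Filter.cofinite ⊓ Filter.principal S) :=
    Filter.inter_mem (Filter.mem_inf_of_left hWnhds)
      (Filter.mem_inf_of_right (Filter.mem_inf_of_right (Filter.mem_principal_self S)))
  obtain ⟨u, huW, huS⟩ := Filter.nonempty_of_mem hWS
  -- find v ≠ u in W ∩ S
  have hWSu : (W ∩ S) ∩ {u}ᶜ ∈ nhds p ⊓ (Filter.cofinite ⊓ Filter.principal S) := by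
    refine Filter.inter_mem hWS ?_
    exact Filter.mem_inf_of_right (Filter.mem_inf_of_left (by
      simp [Filter.mem_cofinite]))
  obtain ⟨v, ⟨hvW, hvS⟩, hvne⟩ := Filter.nonempty_of_mem hWSu
  -- derive contradiction
  have huH : u * x⁻¹ ∈ H := huS.2
  have hvH : v * x⁻¹ ∈ H := hvS.2
  have huvH : u * v⁻¹ ∈ H := by
    have := H.mul_mem huH (H.inv_mem hvH)
    simpa [mul_assoc] using this
  have huvU : u * v⁻¹ ∈ U := by
    have := hV _ huW _ hvW
    simpa [div_eq_mul_inv, mul_assoc] using this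
  have : u * v⁻¹ = 1 := hmem _ huvH huvU
  exact hvne (mul_inv_eq_one.mp this).symm

theorem stmt_5 {G : Type*} [Group G] [TopologicalSpace G] [IsTopologicalGroup G]
    (A B : Set G) (hA : IsCompact A) (hB : IsCompact B) (a b c : G)
    (hd : DiscreteTopology (Subgroup.closure {a, b, c}))
    (h1 : a • A ∪ b • B ⊆ A ∪ B) (h2 : a • A ∩ b • B ⊆ c • (A ∩ B)) :
    a • A ∪ b • B = A ∪ B ∧ a • A ∩ b • B = c • (A ∩ B) := by
  set H := Subgroup.closure ({a, b, c} : Set G) with hH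
  have ha : a ∈ H := Subgroup.subset_closure (by simp)
  have hb : b ∈ H := Subgroup.subset_closure (by simp)
  have hc : c ∈ H := Subgroup.subset_closure (by simp)
  -- key: for every g, equality holds on the coset {y | y * g⁻¹ ∈ H}
  have key : ∀ g : G,
      (A ∪ B) ∩ {y : G | y * g⁻¹ ∈ H} = (a • A ∪ b • B) ∩ {y : G | y * g⁻¹ ∈ H} ∧
      (c • (A ∩ B)) ∩ {y : G | y * g⁻¹ ∈ H} = (a • A ∩ b • B) ∩ {y : G | y * g⁻¹ ∈ H} := by
    intro g
    set T : Set G := {y : G | y * g⁻¹ ∈ H} with hT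
    have hsmulT : ∀ h : G, h ∈ H → h • T = T := by
      intro h hh
      ext y
      simp only [Set.mem_smul_set_iff_inv_smul_mem, hT, Set.mem_setOf_eq, smul_eq_mul]
      constructor
      · intro hy
        have := H.mul_mem hh hy
        simpa [mul_assoc] using this
      · intro hy
        have := H.mul_mem (H.inv_mem hh) hy
        simpa [mul_assoc] using this
    have hsmul_inter : ∀ (h : G) (C : Set G), h ∈ H → (h • C) ∩ T = h • (C ∩ T) := by
      intro h C hh
      rw [Set.smul_set_inter, hsmulT h hh]
    have fA : (A ∩ T).Finite := key_fin H hA g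
    have fB : (B ∩ T).Finite := key_fin H hB g
    have fAB : ((A ∩ B) ∩ T).Finite := fA.subset (Set.inter_subset_inter_left _ Set.inter_subset_left)
    have faA : ((a • A) ∩ T).Finite := by
      rw [hsmul_inter a A ha]; exact fA.smul_set
    have fbB : ((b • B) ∩ T).Finite := by
      rw [hsmul_inter b B hb]; exact fB.smul_set
    have fcAB : ((c • (A ∩ B)) ∩ T).Finite := by
      rw [hsmul_inter c _ hc]; exact fAB.smul_set
    -- cardinalities
    have caA : ((a • A) ∩ T).ncard = (A ∩ T).ncard := by
      rw [hsmul_inter a A ha, Set.ncard_smul_set]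
    have cbB : ((b • B) ∩ T).ncard = (B ∩ T).ncard := by
      rw [hsmul_inter b B hb, Set.ncard_smul_set]
    have ccAB : ((c • (A ∩ B)) ∩ T).ncard = ((A ∩ B) ∩ T).ncard := by
      rw [hsmul_inter c _ hc, Set.ncard_smul_set]
    -- inclusion-exclusion on both sides
    have ie1 : ((a • A) ∩ T ∪ (b • B) ∩ T).ncard + ((a • A) ∩ T ∩ ((b • B) ∩ T)).ncard
        = ((a • A) ∩ T).ncard + ((b • B) ∩ T).ncard :=
      Set.ncard_union_add_ncard_inter _ _ faA fbB
    have ie2 : (A ∩ T ∪ B ∩ T).ncard + (A ∩ T ∩ (B ∩ T)).ncard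
        = (A ∩ T).ncard + (B ∩ T).ncard :=
      Set.ncard_union_add_ncard_inter _ _ fA fB
    have eU : (a • A ∪ b • B) ∩ T = (a • A) ∩ T ∪ (b • B) ∩ T := Set.union_inter_distrib_right ..
    have eI : (a • A ∩ b • B) ∩ T = (a • A) ∩ T ∩ ((b • B) ∩ T) := by
      ext y; simp [Set.mem_inter_iff]; tauto
    have eU' : (A ∪ B) ∩ T = A ∩ T ∪ B ∩ T := Set.union_inter_distrib_right ..
    have eI' : (A ∩ B) ∩ T = A ∩ T ∩ (B ∩ T) := by
      ext y; simp [Set.mem_inter_iff]; tauto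
    -- subsets
    have sU : (a • A ∪ b • B) ∩ T ⊆ (A ∪ B) ∩ T := Set.inter_subset_inter_left _ h1
    have sI : (a • A ∩ b • B) ∩ T ⊆ (c • (A ∩ B)) ∩ T := Set.inter_subset_inter_left _ h2
    have fU' : ((A ∪ B) ∩ T).Finite := by rw [eU']; exact fA.union fB
    have cardU : ((a • A ∪ b • B) ∩ T).ncard ≤ ((A ∪ B) ∩ T).ncard :=
      Set.ncard_le_ncard sU fU'
    have cardI : ((a • A ∩ b • B) ∩ T).ncard ≤ ((c • (A ∩ B)) ∩ T).ncard :=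
      Set.ncard_le_ncard sI fcAB
    have sumeq : ((a • A ∪ b • B) ∩ T).ncard + ((a • A ∩ b • B) ∩ T).ncard
        = ((A ∪ B) ∩ T).ncard + ((c • (A ∩ B)) ∩ T).ncard := by
      rw [eU, eI, eU', ccAB, eI', ie1, ie2, caA, cbB]
    have hU : ((A ∪ B) ∩ T).ncard ≤ ((a • A ∪ b • B) ∩ T).ncard := by omega
    have hI : ((c • (A ∩ B)) ∩ T).ncard ≤ ((a • A ∩ b • B) ∩ T).ncard := by omega
    exact ⟨(Set.eq_of_subset_of_ncard_le sU hU fU').symm,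
      (Set.eq_of_subset_of_ncard_le sI hI fcAB).symm⟩
  constructor
  · refine Set.Subset.antisymm h1 ?_
    intro g hg
    have hgT : g ∈ {y : G | y * g⁻¹ ∈ H} := by simp [H.one_mem]
    have := (key g).1
    have hg' : g ∈ (a • A ∪ b • B) ∩ {y : G | y * g⁻¹ ∈ H} := this ▸ ⟨hg, hgT⟩
    exact hg'.1
  · refine Set.Subset.antisymm h2 ?_
    intro g hg
    have hgT : g ∈ {y : G | y * g⁻¹ ∈ H} := by simp [H.one_mem]
    have := (key g).2
    have hg' : g ∈ (a • A ∩ b • B) ∩ {y : G | y * g⁻¹ ∈ H} := this ▸ ⟨hg, hgT⟩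
    exact hg'.1
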